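/- Let U_s : ℝ → ℝ be twice continuously differentiable, α ∈ ℝ, c ∈ ℂ, and let ψ be a twice continuously differentiable complex-valued solution of the Rayleigh equation with parameters α, c on an open interval I. Set Y(y) = (U_s(y) − c)² and suppose that (U_s(y) − c)(U_s'(y)ψ(y) − (U_s(y) − c)ψ'(y)) ≠ 0 on I. Then Ω(y) = ψ(y) / ((U_s(y) − c)(U_s'(y)ψ(y) − (U_s(y) − c)ψ'(y))) is differentiable on I and satisfies Ω'(y) = α² Y(y) Ω(y)² − Y(y)^{−1} for all y ∈ I. -/

import Mathlib

open Set

/-- `ψ` (together with its first and second derivative functions `ψ'`, `ψ''`) is a twice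
continuously differentiable solution on `I` of the Rayleigh equation
`(Us y - c) (ψ'' - α² ψ) - Us'' ψ = 0` with parameters `α`, `c` and profile `Us`. -/
def IsRayleighSolutionOn (Us : ℝ → ℝ) (α : ℝ) (c : ℂ)
    (ψ ψ' ψ'' : ℝ → ℂ) (I : Set ℝ) : Prop :=
  (∀ y ∈ I, HasDerivAt ψ (ψ' y) y) ∧
  (∀ y ∈ I, HasDerivAt ψ' (ψ'' y) y) ∧
  ContinuousOn ψ'' I ∧
  ∀ y ∈ I, ((Us y : ℂ) - c) * (ψ'' y - (α : ℂ)^2 * ψ y)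
      - Complex.ofReal (deriv (deriv Us) y) * ψ y = 0

set_option maxHeartbeats 1000000 in
/-- Miles' function `Ω = ψ / ((Us − c)(Us' ψ − (Us − c) ψ'))` satisfies the
Riccati equation `Ω' = α² Y Ω² − Y⁻¹` with `Y = (Us − c)²`. -/
theorem rayleigh_miles_riccati
    (Us : ℝ → ℝ) (hUs : ContDiff ℝ 2 Us) (α : ℝ) (c : ℂ)
    (a b : ℝ) (ψ ψ' ψ'' : ℝ → ℂ)
    (hsol : IsRayleighSolutionOn Us α c ψ ψ' ψ'' (Ioo a b))
    (hne : ∀ y ∈ Ioo a b,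
      ((Us y : ℂ) - c) *
        (Complex.ofReal (deriv Us y) * ψ y - ((Us y : ℂ) - c) * ψ' y) ≠ 0) :
    ∀ y ∈ Ioo a b,
      HasDerivAt
        (fun y : ℝ => ψ y /
          (((Us y : ℂ) - c) *
            (Complex.ofReal (deriv Us y) * ψ y - ((Us y : ℂ) - c) * ψ' y)))
        ((α : ℂ)^2 * ((Us y : ℂ) - c)^2 *
            (ψ y / (((Us y : ℂ) - c) *
              (Complex.ofReal (deriv Us y) * ψ y - ((Us y : ℂ) - c) * ψ' y)))^2
          - (((Us y : ℂ) - c)^2)⁻¹) y := by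
  intro y hy
  obtain ⟨hψ, hψ', _, hRay⟩ := hsol
  have hUsd : HasDerivAt Us (deriv Us y) y :=
    (hUs.differentiable (by norm_num)).differentiableAt.hasDerivAt
  have hUsd2 : HasDerivAt (deriv Us) (deriv (deriv Us) y) y := by
    have h2 : ContDiff ℝ (1+1) Us := by exact_mod_cast hUs
    have : ContDiff ℝ 1 (deriv Us) := (contDiff_succ_iff_deriv.mp h2).2.2
    exact (this.differentiable one_ne_zero).differentiableAt.hasDerivAt
  have hU : HasDerivAt (fun t : ℝ => ((Us t : ℂ) - c)) (Complex.ofReal (deriv Us y)) y :=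
    (hUsd.ofReal_comp).sub_const c
  have hU' : HasDerivAt (fun t : ℝ => (Complex.ofReal (deriv Us t))) (Complex.ofReal (deriv (deriv Us) y)) y :=
    hUsd2.ofReal_comp
  have hW : HasDerivAt
      (fun t : ℝ => Complex.ofReal (deriv Us t) * ψ t - ((Us t : ℂ) - c) * ψ' t)
      (Complex.ofReal (deriv (deriv Us) y) * ψ y + Complex.ofReal (deriv Us y) * ψ' y
        - (Complex.ofReal (deriv Us y) * ψ' y + ((Us y : ℂ) - c) * ψ'' y)) y :=
    (hU'.mul (hψ y hy)).sub (hU.mul (hψ' y hy))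
  have hD : HasDerivAt
      (fun t : ℝ => ((Us t : ℂ) - c) *
        (Complex.ofReal (deriv Us t) * ψ t - ((Us t : ℂ) - c) * ψ' t))
      (Complex.ofReal (deriv Us y) * (Complex.ofReal (deriv Us y) * ψ y - ((Us y : ℂ) - c) * ψ' y)
        + ((Us y : ℂ) - c) *
          (Complex.ofReal (deriv (deriv Us) y) * ψ y + Complex.ofReal (deriv Us y) * ψ' y
            - (Complex.ofReal (deriv Us y) * ψ' y + ((Us y : ℂ) - c) * ψ'' y))) y :=
    hU.mul hW
  have hDne := hne y hy
  have hQ := (hψ y hy).div hD hDne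
  refine hQ.congr_deriv (Eq.symm ?_)
  have hu : ((Us y : ℂ) - c) ≠ 0 := fun h => hDne (by rw [h]; ring)
  have hw : (Complex.ofReal (deriv Us y) * ψ y - ((Us y : ℂ) - c) * ψ' y) ≠ 0 :=
    fun h => hDne (by rw [h]; ring)
  have hR := hRay y hy
  set u := ((Us y : ℂ) - c) with hudef
  set p := Complex.ofReal (deriv Us y) with hpdef
  set q := Complex.ofReal (deriv (deriv Us) y) with hqdef
  set s := ψ y with hsdef
  set s1 := ψ' y with hs1def
  set s2 := ψ'' y with hs2def
  have hw2 : p * s - u * s1 ≠ 0 := hw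
  clear_value u p q s s1 s2
  field_simp
  have hW2' : (s * p - u * s1) ^ 2 ≠ 0 := pow_ne_zero 2 (by rw [mul_comm s p]; exact hw2)
  rw [div_sub_one hW2', div_left_inj' hW2']
  linear_combination (-(u * s)) * hR
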